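/- Let Q₀ : ℝ → ℂ be continuous with |Q₀(t)| = 1 for all t ∈ ℝ. Set P₀(t) = ∫₀ᵗ Q₀(τ) dτ, P̄₀(t) = ∫₀ᵗ conj(Q₀(τ)) dτ, Q₁(t) = Q₀(t)·P̄₀(t), and P₁(t) = ∫₀ᵗ Q₁(τ) dτ. Assume that P₀, P̄₀ and P₁ are bounded on ℝ and that the mean values M(Q₁·P̄₀), M(Q₀·P₁) and M(Q₀·P₀·P̄₀) exist. Then M(Q₁·P̄₀) = 2·conj( M(Q₀·P₁) ), i.e., M( Q₁(t)·∫₀ᵗ conj(Q₀) ) = 2·conj( M( Q₀(t)·∫₀ᵗ Q₁ ) ). -/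

import Mathlib

open Filter MeasureTheory intervalIntegral

noncomputable section

/-- The mean value `M(h)` of a function `h : ℝ → ℂ`:
`M(h) = L` iff `(1/(2T)) ∫_{-T}^{T} h(t) dt → L` as `T → +∞`. -/
def MeanValueIs (h : ℝ → ℂ) (L : ℂ) : Prop :=
  Tendsto (fun T : ℝ => (1 / (2 * T)) • ∫ t in (-T)..T, h t) atTop (nhds L)

private lemma intervalIntegral_conj' (f : ℝ → ℂ) (a b : ℝ) :
    (∫ t in a..b, (starRingEnd ℂ) (f t)) = (starRingEnd ℂ) (∫ t in a..b, f t) := by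
  simp [intervalIntegral, ← integral_conj]

private lemma tendsto_smul_sub_zero (F : ℝ → ℂ) (M : ℝ) (hF : ∀ t, ‖F t‖ ≤ M) :
    Tendsto (fun T : ℝ => (1 / (2 * T)) • (F T - F (-T))) atTop (nhds 0) := by
  apply squeeze_zero_norm' (a := fun T : ℝ => M / T)
  · filter_upwards [eventually_ge_atTop (1 : ℝ)] with T hT
    have hT0 : (0 : ℝ) < T := lt_of_lt_of_le one_pos hT
    have h1 : ‖F T - F (-T)‖ ≤ 2 * M := (norm_sub_le _ _).trans (by linarith [hF T, hF (-T)])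
    have h2 : ‖(1 / (2 * T) : ℝ) • (F T - F (-T))‖ = (1 / (2 * T)) * ‖F T - F (-T)‖ := by
      rw [norm_smul, Real.norm_eq_abs, abs_of_pos (by positivity)]
    rw [h2]
    have h3 : (0 : ℝ) < 1 / (2 * T) := by positivity
    have h4 := mul_le_mul_of_nonneg_left h1 h3.le
    have h5 : (1 / (2 * T)) * (2 * M) = M / T := by field_simp
    linarith
  · simpa [div_eq_mul_inv] using tendsto_inv_atTop_zero.const_mul M

theorem mean_value_Q1_conjQ0_identity
    (Q₀ : ℝ → ℂ) (hQ₀cont : Continuous Q₀) (hQ₀abs : ∀ t : ℝ, ‖Q₀ t‖ = 1)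
    (P₀ P₀bar Q₁ P₁ : ℝ → ℂ)
    (hP₀ : ∀ t : ℝ, P₀ t = ∫ τ in (0:ℝ)..t, Q₀ τ)
    (hP₀bar : ∀ t : ℝ, P₀bar t = ∫ τ in (0:ℝ)..t, (starRingEnd ℂ) (Q₀ τ))
    (hQ₁ : ∀ t : ℝ, Q₁ t = Q₀ t * P₀bar t)
    (hP₁ : ∀ t : ℝ, P₁ t = ∫ τ in (0:ℝ)..t, Q₁ τ)
    (hP₀bdd : ∃ M : ℝ, ∀ t : ℝ, ‖P₀ t‖ ≤ M)
    (hP₀barbdd : ∃ M : ℝ, ∀ t : ℝ, ‖P₀bar t‖ ≤ M)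
    (hP₁bdd : ∃ M : ℝ, ∀ t : ℝ, ‖P₁ t‖ ≤ M)
    (L₁ L₂ : ℂ)
    (hL₁ : MeanValueIs (fun t => Q₁ t * P₀bar t) L₁)
    (hL₂ : MeanValueIs (fun t => Q₀ t * P₁ t) L₂)
    (hL₃ : ∃ L₃ : ℂ, MeanValueIs (fun t => Q₀ t * P₀ t * P₀bar t) L₃) :
    L₁ = 2 * (starRingEnd ℂ) L₂ := by
  obtain ⟨L₃, hL₃⟩ := hL₃
  obtain ⟨M₀, h₀⟩ := hP₀bdd
  obtain ⟨Mb, hb⟩ := hP₀barbdd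
  obtain ⟨M₁, h₁⟩ := hP₁bdd
  -- continuity of the conjugate of Q₀
  have hcQ : Continuous fun t => (starRingEnd ℂ) (Q₀ t) := Complex.continuous_conj.comp hQ₀cont
  -- derivative facts
  have hP₀d : ∀ t, HasDerivAt P₀ (Q₀ t) t := fun t =>
    ((hQ₀cont.integral_hasStrictDerivAt 0 t).hasDerivAt).congr_of_eventuallyEq
      (Eventually.of_forall hP₀)
  have hPbd : ∀ t, HasDerivAt P₀bar ((starRingEnd ℂ) (Q₀ t)) t := fun t =>
    ((hcQ.integral_hasStrictDerivAt 0 t).hasDerivAt).congr_of_eventuallyEq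
      (Eventually.of_forall hP₀bar)
  have hP₀diff : Differentiable ℝ P₀ := fun t => (hP₀d t).differentiableAt
  have hP₀cont : Continuous P₀ := hP₀diff.continuous
  have hPbdiff : Differentiable ℝ P₀bar := fun t => (hPbd t).differentiableAt
  have hPbcont : Continuous P₀bar := hPbdiff.continuous
  have hQ₁cont : Continuous Q₁ := (hQ₀cont.mul hPbcont).congr fun t => (hQ₁ t).symm
  have hP₁d : ∀ t, HasDerivAt P₁ (Q₁ t) t := fun t =>
    ((hQ₁cont.integral_hasStrictDerivAt 0 t).hasDerivAt).congr_of_eventuallyEq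
      (Eventually.of_forall hP₁)
  have hP₁diff : Differentiable ℝ P₁ := fun t => (hP₁d t).differentiableAt
  have hP₁cont : Continuous P₁ := hP₁diff.continuous
  -- conjugation facts
  have hconj₀ : ∀ t, (starRingEnd ℂ) (P₀ t) = P₀bar t := fun t => by
    rw [hP₀, hP₀bar, intervalIntegral_conj']
  have hconj₀' : ∀ t, (starRingEnd ℂ) (P₀bar t) = P₀ t := fun t => by
    rw [← hconj₀ t, Complex.conj_conj]
  have hP₀0 : P₀ 0 = 0 := by simp [hP₀]
  have hPb0 : P₀bar 0 = 0 := by simp [hP₀bar]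
  -- integration by parts: conj(P₁) = P₀ * P₀bar - P₁
  have hconj₁ : ∀ t, (starRingEnd ℂ) (P₁ t) = P₀ t * P₀bar t - P₁ t := by
    intro t
    have hparts := intervalIntegral.integral_deriv_mul_eq_sub (a := 0) (b := t)
      (u := P₀bar) (v := P₀) (u' := fun τ => (starRingEnd ℂ) (Q₀ τ)) (v' := Q₀)
      (fun x _ => hPbd x) (fun x _ => hP₀d x)
      (hcQ.intervalIntegrable _ _) (hQ₀cont.intervalIntegrable _ _)
    simp only [hP₀0, hPb0, mul_zero, zero_mul, sub_zero] at hparts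
    have h1 : (starRingEnd ℂ) (P₁ t) = ∫ τ in (0:ℝ)..t, (starRingEnd ℂ) (Q₁ τ) := by
      rw [hP₁, ← intervalIntegral_conj']
    have h2 : (∫ τ in (0:ℝ)..t, (starRingEnd ℂ) (Q₁ τ))
        = ∫ τ in (0:ℝ)..t, (starRingEnd ℂ) (Q₀ τ) * P₀ τ := by
      apply intervalIntegral.integral_congr
      intro τ _
      simp only [hQ₁, map_mul, hconj₀']
    have h3 : (∫ τ in (0:ℝ)..t, P₀bar τ * Q₀ τ) = P₁ t := by
      rw [hP₁]
      apply intervalIntegral.integral_congr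
      intro τ _
      simp only [hQ₁]; ring
    have h4 : (∫ τ in (0:ℝ)..t, ((starRingEnd ℂ) (Q₀ τ) * P₀ τ + P₀bar τ * Q₀ τ))
        = (∫ τ in (0:ℝ)..t, (starRingEnd ℂ) (Q₀ τ) * P₀ τ)
          + ∫ τ in (0:ℝ)..t, P₀bar τ * Q₀ τ :=
      intervalIntegral.integral_add ((hcQ.mul hP₀cont).intervalIntegrable _ _)
        ((hPbcont.mul hQ₀cont).intervalIntegrable _ _)
    rw [h4, h3] at hparts
    rw [h1, h2]
    linear_combination hparts
  -- continuity of the various integrands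
  have hc₃ : Continuous fun t => (starRingEnd ℂ) (Q₀ t * P₀ t * P₀bar t) :=
    Complex.continuous_conj.comp ((hQ₀cont.mul hP₀cont).mul hPbcont)
  have hc₂ : Continuous fun t => (starRingEnd ℂ) (Q₀ t * P₁ t) :=
    Complex.continuous_conj.comp (hQ₀cont.mul hP₁cont)
  have hcQ₁Pb : Continuous fun t => Q₁ t * P₀bar t := hQ₁cont.mul hPbcont
  -- Identity A
  have IA : ∀ T : ℝ, (∫ t in (-T)..T, Q₁ t * P₀bar t)
      + 2 * (∫ t in (-T)..T, (starRingEnd ℂ) (Q₀ t * P₀ t * P₀bar t))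
      = (P₀ T * (P₀bar T * P₀bar T)) - (P₀ (-T) * (P₀bar (-T) * P₀bar (-T))) := by
    intro T
    have hv : ∀ x, HasDerivAt (fun t => P₀bar t * P₀bar t)
        ((starRingEnd ℂ) (Q₀ x) * P₀bar x + P₀bar x * (starRingEnd ℂ) (Q₀ x)) x :=
      fun x => (hPbd x).mul (hPbd x)
    have key := intervalIntegral.integral_deriv_mul_eq_sub (a := -T) (b := T)
      (u := P₀) (v := fun t => P₀bar t * P₀bar t) (u' := Q₀)
      (v' := fun x => (starRingEnd ℂ) (Q₀ x) * P₀bar x + P₀bar x * (starRingEnd ℂ) (Q₀ x))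
      (fun x _ => hP₀d x) (fun x _ => hv x)
      (hQ₀cont.intervalIntegrable _ _)
      (((hcQ.mul hPbcont).add (hPbcont.mul hcQ)).intervalIntegrable _ _)
    rw [← key]
    rw [← intervalIntegral.integral_const_mul,
      ← intervalIntegral.integral_add (g := fun t => (2:ℂ) * (starRingEnd ℂ) (Q₀ t * P₀ t * P₀bar t)) (hcQ₁Pb.intervalIntegrable _ _)
        ((continuous_const.mul hc₃).intervalIntegrable _ _)]
    apply intervalIntegral.integral_congr
    intro x _
    simp only [hQ₁, map_mul, hconj₀, hconj₀']
    ring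
  -- Identity B
  have IB : ∀ T : ℝ, (∫ t in (-T)..T, Q₁ t * P₀bar t)
      + (∫ t in (-T)..T, (starRingEnd ℂ) (Q₀ t * P₀ t * P₀bar t))
      - (∫ t in (-T)..T, (starRingEnd ℂ) (Q₀ t * P₁ t))
      = (P₀bar T * P₁ T) - (P₀bar (-T) * P₁ (-T)) := by
    intro T
    have key := intervalIntegral.integral_deriv_mul_eq_sub (a := -T) (b := T)
      (u := P₀bar) (v := P₁) (u' := fun x => (starRingEnd ℂ) (Q₀ x)) (v' := Q₁)
      (fun x _ => hPbd x) (fun x _ => hP₁d x)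
      (hcQ.intervalIntegrable _ _) (hQ₁cont.intervalIntegrable _ _)
    rw [← key]
    rw [← intervalIntegral.integral_add (hcQ₁Pb.intervalIntegrable _ _)
        (hc₃.intervalIntegrable _ _),
      ← intervalIntegral.integral_sub (f := fun t => Q₁ t * P₀bar t + (starRingEnd ℂ) (Q₀ t * P₀ t * P₀bar t))
        ((hcQ₁Pb.add hc₃).intervalIntegrable _ _) (hc₂.intervalIntegrable _ _)]
    apply intervalIntegral.integral_congr
    intro x _
    simp only [hQ₁, map_mul, hconj₀, hconj₀', hconj₁]
    ring
  -- conjugated mean values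
  have smulconj : ∀ (r : ℝ) (z : ℂ), (starRingEnd ℂ) (r • z) = r • (starRingEnd ℂ) z :=
    fun r z => by simp [star_smul]
  have hc3lim : Tendsto (fun T : ℝ =>
      (1 / (2 * T)) • ∫ t in (-T)..T, (starRingEnd ℂ) (Q₀ t * P₀ t * P₀bar t)) atTop
      (nhds ((starRingEnd ℂ) L₃)) := by
    have h := (Complex.continuous_conj.tendsto L₃).comp hL₃
    refine h.congr fun T => ?_
    simp only [Function.comp_apply]
    rw [intervalIntegral_conj', smulconj]
  have hc2lim : Tendsto (fun T : ℝ =>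
      (1 / (2 * T)) • ∫ t in (-T)..T, (starRingEnd ℂ) (Q₀ t * P₁ t)) atTop
      (nhds ((starRingEnd ℂ) L₂)) := by
    have h := (Complex.continuous_conj.tendsto L₂).comp hL₂
    refine h.congr fun T => ?_
    simp only [Function.comp_apply]
    rw [intervalIntegral_conj', smulconj]
  -- boundedness of the products
  have hM₀0 : (0 : ℝ) ≤ M₀ := le_trans (norm_nonneg _) (h₀ 0)
  have hMb0 : (0 : ℝ) ≤ Mb := le_trans (norm_nonneg _) (hb 0)
  have hM₁0 : (0 : ℝ) ≤ M₁ := le_trans (norm_nonneg _) (h₁ 0)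
  have hbd₁ : ∀ t, ‖P₀ t * (P₀bar t * P₀bar t)‖ ≤ M₀ * (Mb * Mb) := by
    intro t
    rw [norm_mul, norm_mul]
    gcongr <;> first | exact h₀ t | exact hb t | exact hMb0 | exact hM₀0 | positivity
  have hbd₂ : ∀ t, ‖P₀bar t * P₁ t‖ ≤ Mb * M₁ := by
    intro t
    rw [norm_mul]
    gcongr <;> first | exact hb t | exact h₁ t | exact hM₁0 | exact hMb0 | positivity
  -- limit equations
  have eqA : L₁ + 2 * (starRingEnd ℂ) L₃ = 0 := by
    refine tendsto_nhds_unique ?_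
      (tendsto_smul_sub_zero (fun t => P₀ t * (P₀bar t * P₀bar t)) (M₀ * (Mb * Mb)) hbd₁)
    have h := hL₁.add (hc3lim.const_mul (2 : ℂ))
    refine h.congr fun T => ?_
    rw [← IA T, smul_add, mul_smul_comm]
  have eqB : L₁ + (starRingEnd ℂ) L₃ - (starRingEnd ℂ) L₂ = 0 := by
    refine tendsto_nhds_unique ?_
      (tendsto_smul_sub_zero (fun t => P₀bar t * P₁ t) (Mb * M₁) hbd₂)
    have h := (hL₁.add hc3lim).sub hc2lim
    refine h.congr fun T => ?_
    rw [← IB T, smul_sub, smul_add]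
  linear_combination 2 * eqB - eqA
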